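/- Let V be a finite dimensional real normed vector space with a closed proper convex cone γ of non-empty interior, and let v ∈ Int(−γ). Then the set B_v = (v + γ) ∩ (−v − γ) is a symmetric, closed, bounded, convex subset of V with 0 in its interior. -/

import Mathlib

open Pointwise

/-- For `v ∈ Int(-γ)`, the set `B_v = (v + γ) ∩ (-v - γ)` is a symmetric, closed, bounded,
convex subset of `V` with `0` in its interior. -/
theorem stmt12 {V : Type*} [NormedAddCommGroup V] [NormedSpace ℝ V] [FiniteDimensional ℝ V]
    (γ : Set V) (h0 : (0 : V) ∈ γ) (hsmul : ∀ c : ℝ, 0 < c → c • γ ⊆ γ)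
    (hconv : Convex ℝ γ) (hcl : IsClosed γ) (hproper : γ ∩ (-γ) = {0})
    (hint : (interior γ).Nonempty)
    (v : V) (hv : v ∈ interior (-γ)) :
    (((v + ·) '' γ) ∩ ((-v + ·) '' (-γ))) = -(((v + ·) '' γ) ∩ ((-v + ·) '' (-γ))) ∧
    IsClosed (((v + ·) '' γ) ∩ ((-v + ·) '' (-γ))) ∧
    Bornology.IsBounded (((v + ·) '' γ) ∩ ((-v + ·) '' (-γ))) ∧
    Convex ℝ (((v + ·) '' γ) ∩ ((-v + ·) '' (-γ))) ∧
    (0 : V) ∈ interior (((v + ·) '' γ) ∩ ((-v + ·) '' (-γ))) := by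
  set B : Set V := ((v + ·) '' γ) ∩ ((-v + ·) '' (-γ)) with hB
  -- symmetry
  have hsym : ∀ x ∈ B, -x ∈ B := by
    rintro x ⟨⟨a, ha, rfl⟩, ⟨b, hb, hab⟩⟩
    constructor
    · refine ⟨-b, ?_, ?_⟩
      · simpa using hb
      · simp only [← hab]; abel
    · exact ⟨-a, by simpa using ha, by show -v + -a = -(v + a); abel⟩
  refine ⟨?_, ?_, ?_, ?_, ?_⟩
  · ext x
    constructor
    · intro hx
      rw [Set.mem_neg]
      exact hsym x hx
    · intro hx
      rw [Set.mem_neg] at hx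
      simpa using hsym _ hx
  · exact IsClosed.inter ((Homeomorph.addLeft v).isClosedMap _ hcl)
      ((Homeomorph.addLeft (-v)).isClosedMap _ hcl.neg)
  · by_contra hbdd
    rw [isBounded_iff_forall_norm_le] at hbdd
    push_neg at hbdd
    choose x hxB hxn using fun n : ℕ => hbdd n
    have hxpos : ∀ n : ℕ, (0 : ℝ) < ‖x n‖ := fun n =>
      lt_of_le_of_lt (Nat.cast_nonneg n) (hxn n)
    set u : ℕ → V := fun n => ‖x n‖⁻¹ • x n with hu
    have husph : ∀ n, u n ∈ Metric.sphere (0 : V) 1 := by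
      intro n
      simp [hu, norm_smul, abs_of_pos (hxpos n), inv_mul_cancel₀ (hxpos n).ne']
    obtain ⟨w, hwsph, φ, hφ, hconvg⟩ :=
      (isCompact_sphere (0 : V) 1).tendsto_subseq husph
    have hnorm_top : Filter.Tendsto (fun k => ‖x (φ k)‖) Filter.atTop Filter.atTop := by
      apply Filter.tendsto_atTop_mono _ (tendsto_natCast_atTop_atTop (R := ℝ))
      intro k
      exact le_of_lt (lt_of_le_of_lt (Nat.cast_le.2 (hφ.id_le k)) (hxn (φ k)))
    have hinv0 : Filter.Tendsto (fun k => ‖x (φ k)‖⁻¹) Filter.atTop (nhds 0) :=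
      Filter.Tendsto.inv_tendsto_atTop hnorm_top
    have hsv : Filter.Tendsto (fun k => ‖x (φ k)‖⁻¹ • v) Filter.atTop (nhds 0) := by
      simpa using hinv0.smul_const v
    -- helper: membership of the limit
    have hmem : ∀ (e : V) (s : Set V), IsClosed s → (∀ c : ℝ, 0 < c → c • s ⊆ s) →
        (∀ n, x n + e ∈ s) → w ∈ s := by
      intro e s hscl hss hxs
      have hse : Filter.Tendsto (fun k => ‖x (φ k)‖⁻¹ • e) Filter.atTop (nhds 0) := by
        simpa using hinv0.smul_const e
      have hseq : ∀ k, u (φ k) + ‖x (φ k)‖⁻¹ • e ∈ s := by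
        intro k
        have := hss ‖x (φ k)‖⁻¹ (inv_pos.2 (hxpos (φ k)))
          (Set.smul_mem_smul_set (hxs (φ k)))
        simpa [hu, smul_add] using this
      have hlim : Filter.Tendsto (fun k => u (φ k) + ‖x (φ k)‖⁻¹ • e)
          Filter.atTop (nhds w) := by
        simpa using hconvg.add hse
      exact hscl.mem_of_tendsto hlim (Filter.Eventually.of_forall hseq)
    have hwγ : w ∈ γ := by
      refine hmem (-v) γ hcl hsmul fun n => ?_
      obtain ⟨⟨a, ha, hax⟩, -⟩ := hxB n
      have : x n + -v = a := by rw [← hax]; show v + a + -v = a; abel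
      rw [this]; exact ha
    have hwγ' : w ∈ -γ := by
      have hnγ : ∀ c : ℝ, 0 < c → c • (-γ) ⊆ -γ := by
        intro c hc y hy
        obtain ⟨z, hz, rfl⟩ := hy
        rw [Set.mem_neg] at hz ⊢
        have : c • (-z) ∈ γ := hsmul c hc (Set.smul_mem_smul_set hz)
        simpa using this
      refine hmem v (-γ) hcl.neg hnγ fun n => ?_
      obtain ⟨-, ⟨b, hb, hbx⟩⟩ := hxB n
      have : x n + v = b := by rw [← hbx]; show -v + b + v = b; abel
      rw [this]; exact hb
    have : w ∈ γ ∩ (-γ) := ⟨hwγ, hwγ'⟩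
    rw [hproper] at this
    have hw1 : ‖w‖ = 1 := by simpa using hwsph
    simp_all
  · exact (hconv.translate v).inter (hconv.neg.translate (-v))
  · have hvι : -v ∈ interior γ := by
      have h' : interior (-γ) = -interior γ := by
        rw [← Set.image_neg_eq_neg (s := γ), ← Set.image_neg_eq_neg (s := interior γ),
          ]
        exact ((Homeomorph.neg V).image_interior γ).symm
      rw [h', Set.mem_neg] at hv
      simpa using hv
    rw [interior_inter]
    constructor
    · have h1 : (v + ·) '' interior γ ⊆ interior ((v + ·) '' γ) :=
        (Homeomorph.addLeft v).isOpenMap.image_interior_subset γ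
      exact h1 ⟨-v, hvι, by simp⟩
    · have h2 : (-v + ·) '' interior (-γ) ⊆ interior ((-v + ·) '' (-γ)) :=
        (Homeomorph.addLeft (-v)).isOpenMap.image_interior_subset (-γ)
      exact h2 ⟨v, hv, by simp⟩
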